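/- Let n ≥ 3 and S = Bⁿ the n-fold direct product of the Boolean semiring B = {0,1}, 1+1=1. Then the set W = {ē₁,…,ēₙ}, where ēᵢ has 1 in every component except the i-th which is 0, is a resolving set for Γ₁(S); hence dim(Γ₁(S)) ≤ n. -/

import Mathlib

/-- `x` is a zero-divisor of the commutative semiring `S`. -/
def IsZD {S : Type*} [CommSemiring S] (x : S) : Prop :=
  ∃ y : S, y ≠ 0 ∧ x * y = 0

/-- The total graph of a commutative semiring: distinct `x, y` are adjacent
iff `x + y` is a zero-divisor. -/
def totalGraph (S : Type*) [CommSemiring S] : SimpleGraph S where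
  Adj x y := x ≠ y ∧ IsZD (x + y)
  symm := by
    constructor
    intro x y h
    exact ⟨h.1.symm, by rw [add_comm]; exact h.2⟩
  loopless := by constructor; intro x h; exact h.1 rfl

/-- The induced subgraph of the total graph on the set of zero-divisors. -/
def gamma1 (S : Type*) [CommSemiring S] : SimpleGraph {x : S // IsZD x} :=
  SimpleGraph.comap Subtype.val (totalGraph S)

/-- A resolving set: distinct vertices have distinct distance vectors to `W`. -/
def IsResolving {V : Type*} (G : SimpleGraph V) (W : Set V) : Prop :=
  ∀ x y : V, (∀ w ∈ W, G.dist x w = G.dist y w) → x = y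

/-- The metric dimension: the least cardinality of a resolving set. -/
noncomputable def metricDim {V : Type*} (G : SimpleGraph V) : ℕ :=
  sInf {k | ∃ W : Set V, W.Finite ∧ W.ncard = k ∧ IsResolving G W}

/-- The Boolean semiring `𝔹 = {0,1}` with `1 + 1 = 1`. -/
inductive BB : Type
  | zero : BB
  | one : BB
deriving DecidableEq

instance : Zero BB := ⟨.zero⟩
instance : One BB := ⟨.one⟩
instance : Add BB := ⟨fun x y => match x, y with | .zero, y => y | .one, _ => .one⟩
instance : Mul BB := ⟨fun x y => match x, y with | .zero, _ => .zero | .one, y => y⟩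
instance : Fintype BB := ⟨{.zero, .one}, by intro x; cases x <;> decide⟩

instance : CommSemiring BB where
  add_assoc := by decide
  zero_add := by decide
  add_zero := by decide
  add_comm := by decide
  mul_assoc := by decide
  one_mul := by decide
  mul_one := by decide
  left_distrib := by decide
  right_distrib := by decide
  zero_mul := by decide
  mul_zero := by decide
  mul_comm := by decide
  nsmul := nsmulRec
  npow := npowRec


namespace Stmt10Aux

lemma bb_cases (x : BB) : x = 0 ∨ x = 1 := by
  cases x
  exacts [Or.inl rfl, Or.inr rfl]

lemma bb_add_eq_zero (a b : BB) : a + b = 0 ↔ a = 0 ∧ b = 0 := by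
  cases a <;> cases b <;> decide

lemma isZD_iff {n : ℕ} (x : Fin n → BB) : IsZD x ↔ ∃ i, x i = 0 := by
  constructor
  · rintro ⟨y, hy, hxy⟩
    have hex : ∃ i, y i ≠ 0 := by
      by_contra h
      push_neg at h
      exact hy (funext fun i => h i)
    obtain ⟨i, hi⟩ := hex
    refine ⟨i, ?_⟩
    have h2 : x i * y i = 0 := congrFun hxy i
    revert h2 hi
    cases x i <;> cases y i <;> decide
  · rintro ⟨i, hi⟩
    refine ⟨fun j => if j = i then 1 else 0, ?_, ?_⟩
    · intro h
      have := congrFun h i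
      simp only [if_pos rfl] at this
      exact (by decide : (1:BB) ≠ 0) this
    · funext j
      show x j * (if j = i then 1 else 0) = 0
      by_cases hj : j = i
      · subst hj; simp [hi]
      · simp [hj]

lemma adj_iff {n : ℕ} (u v : {x : Fin n → BB // IsZD x}) :
    (gamma1 (Fin n → BB)).Adj u v ↔
      u.val ≠ v.val ∧ ∃ i, u.val i = 0 ∧ v.val i = 0 := by
  show u.val ≠ v.val ∧ IsZD (u.val + v.val) ↔ _
  rw [isZD_iff]
  simp only [Pi.add_apply, bb_add_eq_zero]

/-- The vertex with `0` in position `i` and `1` elsewhere. -/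
def e (n : ℕ) (i : Fin n) : Fin n → BB := fun j => if j = i then 0 else 1

lemma e_apply_self {n : ℕ} (i : Fin n) : e n i i = 0 := by simp [e]

lemma e_apply_ne {n : ℕ} {i j : Fin n} (h : j ≠ i) : e n i j = 1 := by simp [e, h]

lemma e_zd {n : ℕ} (i : Fin n) : IsZD (e n i) :=
  (isZD_iff _).mpr ⟨i, e_apply_self i⟩

/-- The vertex of `gamma1` corresponding to `e n i`. -/
def ev (n : ℕ) (i : Fin n) : {x : Fin n → BB // IsZD x} := ⟨e n i, e_zd i⟩

lemma dist_ev_of_zero {n : ℕ} {x : {x : Fin n → BB // IsZD x}} {i : Fin n}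
    (hne : x.val ≠ e n i) (hx : x.val i = 0) :
    (gamma1 (Fin n → BB)).dist x (ev n i) = 1 :=
  SimpleGraph.dist_eq_one_iff_adj.mpr <|
    (adj_iff _ _).mpr ⟨hne, i, hx, e_apply_self i⟩

lemma dist_ev_of_one {n : ℕ} {x : {x : Fin n → BB // IsZD x}} {i : Fin n}
    (hx : x.val i = 1) :
    (gamma1 (Fin n → BB)).dist x (ev n i) = 2 := by
  obtain ⟨j, hj⟩ := (isZD_iff x.val).mp x.2
  have hji : j ≠ i := by
    intro h; rw [h, hx] at hj; exact (by decide : (1:BB) ≠ 0) hj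
  set z : Fin n → BB := fun k => if k = i ∨ k = j then 0 else 1 with hz
  have hzzd : IsZD z := (isZD_iff _).mpr ⟨i, by simp [hz]⟩
  have hxne : x.val ≠ e n i := by
    intro h
    have := congrFun h i
    rw [hx, e_apply_self] at this
    exact (by decide : (1:BB) ≠ 0) this
  have hadj1 : (gamma1 (Fin n → BB)).Adj x ⟨z, hzzd⟩ := by
    refine (adj_iff _ _).mpr ⟨?_, j, hj, by simp [hz]⟩
    intro h
    have := congrFun h i
    rw [hx] at this
    simp [hz] at this
  have hadj2 : (gamma1 (Fin n → BB)).Adj ⟨z, hzzd⟩ (ev n i) := by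
    refine (adj_iff _ _).mpr ⟨?_, i, by simp [hz], e_apply_self i⟩
    intro h
    have h2 : z j = e n i j := congrFun h j
    rw [e_apply_ne hji] at h2
    simp only [hz, or_true, if_true] at h2
    exact (by decide : (0:BB) ≠ 1) h2
  let hw : (gamma1 (Fin n → BB)).Walk x (ev n i) :=
    SimpleGraph.Walk.cons hadj1 (SimpleGraph.Walk.cons hadj2 SimpleGraph.Walk.nil)
  have hle : (gamma1 (Fin n → BB)).dist x (ev n i) ≤ 2 := by
    simpa [hw] using SimpleGraph.dist_le hw
  have hpos : 0 < (gamma1 (Fin n → BB)).dist x (ev n i) :=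
    SimpleGraph.Reachable.pos_dist_of_ne ⟨hw⟩ (fun h => hxne (congrArg Subtype.val h))
  have hne1 : (gamma1 (Fin n → BB)).dist x (ev n i) ≠ 1 := by
    intro h
    obtain ⟨-, k, hk1, hk2⟩ := (adj_iff _ _).mp (SimpleGraph.dist_eq_one_iff_adj.mp h)
    have hki : k = i := by
      by_contra hne
      rw [show (ev n i).val = e n i from rfl, e_apply_ne hne] at hk2
      exact (by decide : (1:BB) ≠ 0) hk2
    rw [hki, hx] at hk1
    exact (by decide : (1:BB) ≠ 0) hk1
  omega

lemma dist_ev_eq_one_iff {n : ℕ} {x : {x : Fin n → BB // IsZD x}} {i : Fin n}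
    (hne : x.val ≠ e n i) :
    (gamma1 (Fin n → BB)).dist x (ev n i) = 1 ↔ x.val i = 0 := by
  constructor
  · intro h
    rcases bb_cases (x.val i) with h0 | h1
    · exact h0
    · rw [dist_ev_of_one h1] at h; omega
  · exact dist_ev_of_zero hne

lemma ev_mem {n : ℕ} (i : Fin n) :
    ev n i ∈ {v : {x : Fin n → BB // IsZD x} |
      ∃ i : Fin n, v.val = fun j => if j = i then (0 : BB) else 1} := ⟨i, rfl⟩

lemma dist_pos_of_ne_ev {n : ℕ} {x : {x : Fin n → BB // IsZD x}} {i : Fin n}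
    (hne : x.val ≠ e n i) : 0 < (gamma1 (Fin n → BB)).dist x (ev n i) := by
  rcases bb_cases (x.val i) with h0 | h1
  · rw [dist_ev_of_zero hne h0]; omega
  · rw [dist_ev_of_one h1]; omega

end Stmt10Aux

open Stmt10Aux in
theorem stmt10 (n : ℕ) (hn : 3 ≤ n) :
    IsResolving (gamma1 (Fin n → BB))
      {v : {x : Fin n → BB // IsZD x} |
        ∃ i : Fin n, v.val = fun j => if j = i then (0 : BB) else 1} ∧
      metricDim (gamma1 (Fin n → BB)) ≤ n := by
  have hres : IsResolving (gamma1 (Fin n → BB))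
      {v : {x : Fin n → BB // IsZD x} |
        ∃ i : Fin n, v.val = fun j => if j = i then (0 : BB) else 1} := by
    intro x y h
    have hAll : ∀ i : Fin n, (gamma1 (Fin n → BB)).dist x (ev n i) = (gamma1 (Fin n → BB)).dist y (ev n i) :=
      fun i => h (ev n i) (ev_mem i)
    by_cases hx : ∃ i, x.val = e n i
    · obtain ⟨i, hi⟩ := hx
      have hxev : x = ev n i := Subtype.ext hi
      have hd : (gamma1 (Fin n → BB)).dist y (ev n i) = 0 := by
        rw [← hAll i, hxev, SimpleGraph.dist_self]
      by_contra hxy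
      have hyne : y.val ≠ e n i := by
        intro h'
        exact hxy (hxev.trans (Subtype.ext h').symm)
      have := dist_pos_of_ne_ev hyne
      omega
    · by_cases hy : ∃ i, y.val = e n i
      · obtain ⟨i, hi⟩ := hy
        have hyev : y = ev n i := Subtype.ext hi
        have hd : (gamma1 (Fin n → BB)).dist x (ev n i) = 0 := by
          rw [hAll i, hyev, SimpleGraph.dist_self]
        push_neg at hx
        have := dist_pos_of_ne_ev (hx i)
        omega
      · push_neg at hx
        push_neg at hy
        refine Subtype.ext (funext fun i => ?_)
        have hiff : x.val i = 0 ↔ y.val i = 0 := by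
          rw [← dist_ev_eq_one_iff (hx i), ← dist_ev_eq_one_iff (hy i), hAll i]
        rcases bb_cases (x.val i) with h0 | h1 <;>
          rcases bb_cases (y.val i) with k0 | k1
        · rw [h0, k0]
        · exact absurd (hiff.mp h0) (by rw [k1]; decide)
        · exact absurd (hiff.mpr k0) (by rw [h1]; decide)
        · rw [h1, k1]
  refine ⟨hres, ?_⟩
  have hinj : Function.Injective (ev n) := by
    intro i j hij
    by_contra hne
    have := congrFun (congrArg Subtype.val hij) i
    rw [show (ev n i).val i = 0 from e_apply_self i,
        show (ev n j).val i = e n j i from rfl, e_apply_ne hne] at this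
    exact (by decide : (1:BB) ≠ 0) this.symm
  set W : Set {x : Fin n → BB // IsZD x} :=
    {v | ∃ i : Fin n, v.val = fun j => if j = i then (0 : BB) else 1} with hW
  have hWeq : W = ev n '' Set.univ := by
    ext v
    constructor
    · rintro ⟨i, hi⟩
      exact ⟨i, trivial, (Subtype.ext hi).symm⟩
    · rintro ⟨i, -, rfl⟩
      exact ⟨i, rfl⟩
  have hfin : W.Finite := by
    rw [hWeq]; exact (Set.finite_univ).image _
  have hcard : W.ncard = n := by
    rw [hWeq, Set.ncard_image_of_injective _ hinj, Set.ncard_univ]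
    simp
  exact Nat.sInf_le ⟨W, hfin, hcard, hres⟩
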